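/- Concentration of the diagonal normalization matrix. Under the pLSI model, suppose Nn·h_min/log(n) → ∞. Then with probability 1 − o(n^{-3}), |M(j,j) − M_0(j,j)| ≤ C·(Nn)^{-1/2}·√(h_j·log(n)) for all 1 ≤ j ≤ p. -/

import Mathlib

noncomputable section
open Filter MeasureTheory ProbabilityTheory Matrix Finset Real
open scoped Classical

namespace TopicModel

/-- Euclidean norm of a vector given by a function. -/
def enorm {m : Type*} [Fintype m] (x : m → ℝ) : ℝ := Real.sqrt (∑ i, (x i) ^ 2)

/-- ℓ¹-norm of a vector given by a function. -/
def l1norm {m : Type*} [Fintype m] (x : m → ℝ) : ℝ := ∑ i, |x i|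

/-- A probability (weight) vector: nonnegative entries summing to 1. -/
def IsProbVec {m : Type*} [Fintype m] (v : m → ℝ) : Prop :=
  (∀ i, 0 ≤ v i) ∧ ∑ i, v i = 1

/-- All columns of a matrix are probability vectors. -/
def ColsProb {p K : ℕ} (A : Matrix (Fin p) (Fin K) ℝ) : Prop :=
  ∀ k, IsProbVec fun j => A j k

/-- `h_j`: the ℓ¹ norm of the j-th row of `A`. -/
def rowL1 {p K : ℕ} (A : Matrix (Fin p) (Fin K) ℝ) (j : Fin p) : ℝ := ∑ k, |A j k|

/-- The diagonal of `diag(n⁻¹ D 1_n)`. -/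
def diagAvg {p n : ℕ} (D : Matrix (Fin p) (Fin n) ℝ) (j : Fin p) : ℝ :=
  (n : ℝ)⁻¹ * ∑ i, D j i

/-- `M^{-1/2} D` for a diagonal normalization `Mdg`. -/
def nrm {p n : ℕ} (D : Matrix (Fin p) (Fin n) ℝ) (Mdg : Fin p → ℝ) :
    Matrix (Fin p) (Fin n) ℝ :=
  Matrix.of fun j i => (Real.sqrt (Mdg j))⁻¹ * D j i

/-- Spectral norm of a (rectangular) matrix. -/
def specNorm {p n : ℕ} (B : Matrix (Fin p) (Fin n) ℝ) : ℝ :=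
  ⨆ x : {x : Fin n → ℝ // ∑ i, (x i) ^ 2 ≤ 1}, enorm (B *ᵥ x.1)

/-- A family of vectors is orthonormal. -/
def OrthonormalRows {K : ℕ} {p : Type*} [Fintype p] (u : Fin K → p → ℝ) : Prop :=
  ∀ k l, ∑ j, u k j * u l j = if k = l then (1 : ℝ) else 0

/-- `(lam k, u k)` are eigenpairs of `G`, with orthonormal eigenvectors. -/
def IsEigenPairs {p K : ℕ} (G : Matrix (Fin p) (Fin p) ℝ)
    (lam : Fin K → ℝ) (u : Fin K → Fin p → ℝ) : Prop :=
  OrthonormalRows u ∧ ∀ k, G *ᵥ u k = lam k • u k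

/-- `xi` consists of the `K` leading (unit-norm) eigenvectors of `G`: the first `K`
vectors of a full orthonormal eigenbasis whose eigenvalues are in decreasing order. -/
def LeadingEigenvectors {p K : ℕ} (hKp : K ≤ p) (G : Matrix (Fin p) (Fin p) ℝ)
    (xi : Fin K → Fin p → ℝ) : Prop :=
  ∃ (lam : Fin p → ℝ) (u : Fin p → Fin p → ℝ),
    IsEigenPairs G lam u ∧ Antitone lam ∧ ∀ k : Fin K, xi k = u (Fin.castLE hKp k)

/-- `xi` consists of the `K` leading left singular vectors of `B`,
i.e. the `K` leading eigenvectors of `B Bᵀ`. -/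
def LeadingLeftSingVecs {p n K : ℕ} (hKp : K ≤ p) (B : Matrix (Fin p) (Fin n) ℝ)
    (xi : Fin K → Fin p → ℝ) : Prop :=
  LeadingEigenvectors hKp (B * Bᵀ) xi

/-- `λ_min(S) ≥ c`, expressed through the quadratic form. -/
def lamMinGe {K : ℕ} (S : Matrix (Fin K) (Fin K) ℝ) (c : ℝ) : Prop :=
  ∀ x : Fin K → ℝ, c * ∑ k, (x k) ^ 2 ≤ x ⬝ᵥ (S *ᵥ x)

/-- The topic-topic concurrence matrix `Σ_W = n⁻¹ W W'`. -/
def SigmaW {K n : ℕ} (W : Matrix (Fin K) (Fin n) ℝ) : Matrix (Fin K) (Fin K) ℝ :=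
  (n : ℝ)⁻¹ • (W * Wᵀ)

/-- The topic-topic correlation matrix `Σ_A = A' H⁻¹ A`. -/
def SigmaA {p K : ℕ} (A : Matrix (Fin p) (Fin K) ℝ) : Matrix (Fin K) (Fin K) ℝ :=
  Aᵀ * (Matrix.diagonal fun j => (rowL1 A j)⁻¹) * A

/-- The matrix `Σ̃_A = A' M₀⁻¹ A`. -/
def SigmaAt {p K n : ℕ} (A : Matrix (Fin p) (Fin K) ℝ) (W : Matrix (Fin K) (Fin n) ℝ) :
    Matrix (Fin K) (Fin K) ℝ :=
  Aᵀ * (Matrix.diagonal fun j => (diagAvg (A * W) j)⁻¹) * A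

/-- All the singular values of the square matrix `S` are pairwise at least `c` apart. -/
def SingValGapGe {K : ℕ} (S : Matrix (Fin K) (Fin K) ℝ) (c : ℝ) : Prop :=
  ∃ (s : Fin K → ℝ) (v : Fin K → Fin K → ℝ),
    (∀ k, 0 ≤ s k) ∧ IsEigenPairs (Sᵀ * S) (fun k => (s k) ^ 2) v ∧
    ∀ k l, k ≠ l → c ≤ |s k - s l|

/-- Regularity conditions (R1)-(R2). -/
def Reg12 {p K n : ℕ} (A : Matrix (Fin p) (Fin K) ℝ) (W : Matrix (Fin K) (Fin n) ℝ)
    (c1 c2 : ℝ) : Prop :=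
  ColsProb A ∧ ColsProb W ∧ (∀ j, 0 < rowL1 A j) ∧
  lamMinGe (SigmaW W) c1 ∧ lamMinGe (SigmaA A) c1 ∧
  (∀ k l, c1 ≤ SigmaA A k l) ∧ SingValGapGe (SigmaW W * SigmaAt A W) c2

/-- `j` is an anchor word for topic `k`. -/
def IsAnchor {p K : ℕ} (A : Matrix (Fin p) (Fin K) ℝ) (j : Fin p) (k : Fin K) : Prop :=
  A j k ≠ 0 ∧ ∀ l, l ≠ k → A j l = 0

/-- Regularity condition (R3): each topic has at least `mp` anchor words, each of
frequency at least `δp`. -/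
def Reg3 {p K : ℕ} (A : Matrix (Fin p) (Fin K) ℝ) (mp : ℕ) (δp : ℝ) : Prop :=
  ∀ k, (mp ≤ Set.ncard {j | IsAnchor A j k}) ∧
    ∀ j, IsAnchor A j k → δp ≤ rowL1 A j

/-- `ã_j = a_j / h_j`: the ℓ¹-normalized `j`-th row of `A`. -/
def tildeRow {p K : ℕ} (A : Matrix (Fin p) (Fin K) ℝ) (j : Fin p) (k : Fin K) : ℝ :=
  A j k / rowL1 A j

/-- Whether `j` is a non-anchor word. -/
def NonAnchor {p K : ℕ} (A : Matrix (Fin p) (Fin K) ℝ) (j : Fin p) : Prop :=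
  ¬ ∃ k, IsAnchor A j k

/-- The k-means loss `RSS_n(L)` associated with the `ã_j` of non-anchor words. -/
def RSS {p K : ℕ} (A : Matrix (Fin p) (Fin K) ℝ) (L : ℕ) : ℝ :=
  ⨅ η : Fin L → Fin K → ℝ,
    ∑ j ∈ Finset.univ.filter (fun j => NonAnchor A j),
      ⨅ l : Fin L, ∑ k, (tildeRow A j k - η l k) ^ 2

/-- Regularity condition (R4). -/
def Reg4 {p K : ℕ} (A : Matrix (Fin p) (Fin K) ℝ) (c3 : ℝ) (L0 mp n : ℕ) : Prop :=
  (∀ j, NonAnchor A j → ∀ k : Fin K,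
      c3 ≤ enorm (fun l => tildeRow A j l - if l = k then 1 else 0)) ∧
  RSS A L0 ≤ (mp : ℝ) / Real.log n

/-- The empirical word-frequency matrix `D` built from the words `X i m` of the
`n` documents (each of length `N`). -/
def empD {p n N : ℕ} (X : Fin n → Fin N → Fin p) : Matrix (Fin p) (Fin n) ℝ :=
  Matrix.of fun j i => (N : ℝ)⁻¹ * ∑ m, if X i m = j then (1 : ℝ) else 0

/-- The pLSI sampling model: the words `X ω i m` (word `m` of document `i`) are
independent across all `(i,m)`, and word `m` of document `i` equals `j` with
probability `D0 j i`.  This is exactly the statement that the columns of the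
empirical frequency matrix are independent with `N dᵢ ~ Multinomial(N, d⁰ᵢ)`. -/
def IsPLSIWords {Ω : Type*} [MeasurableSpace Ω] (μ : Measure Ω)
    {p n N : ℕ} (D0 : Matrix (Fin p) (Fin n) ℝ)
    (X : Ω → Fin n → Fin N → Fin p) : Prop :=
  IsProbabilityMeasure μ ∧
  (∀ i m, Measurable fun ω => X ω i m) ∧
  iIndepFun (m := fun _ : Fin n × Fin N => inferInstance) (fun im ω => X ω im.1 im.2) μ ∧
  ∀ i m j, (μ {ω | X ω i m = j}).toReal = D0 j i

/-- Sign vectors (diagonal ±1 matrices). -/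
def SignVec (K : ℕ) : Type := {ω : Fin K → ℝ // ∀ k, ω k = 1 ∨ ω k = -1}

instance (K : ℕ) : Nonempty (SignVec K) := ⟨⟨fun _ => 1, fun _ => Or.inl rfl⟩⟩

/-- `Δ₁(Z, D₀) = min_{Ω ∈ O_K} max_j h_j^{-1/2} ‖Ω Ξ̂_j - Ξ_j‖`. -/
def Delta1 {p K : ℕ} (hA : Fin p → ℝ) (xihat xi : Fin K → Fin p → ℝ) : ℝ :=
  ⨅ ω : SignVec K, ⨆ j, (Real.sqrt (hA j))⁻¹ * enorm (fun k => ω.1 k * xihat k j - xi k j)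

/-- `Δ₂(Z, D₀) = max_j h_j⁻¹ |M(j,j) - M₀(j,j)|`. -/
def Delta2 {p : ℕ} (hA : Fin p → ℝ) (Md M0d : Fin p → ℝ) : ℝ :=
  ⨆ j, (hA j)⁻¹ * |Md j - M0d j|

/-- The matrix of entry-wise eigen-ratios: `R(j,t) = ξ_{t+1}(j) / ξ_1(j)`. -/
def ratioR {p K : ℕ} (xi : Fin (K + 1) → Fin p → ℝ) (j : Fin p) (t : Fin K) : ℝ :=
  xi t.succ j / xi 0 j

/-- `V*(ℓ,t) = V_{t+1}(ℓ) / V_1(ℓ)`. -/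
def VstarOf {K : ℕ} (V : Matrix (Fin (K + 1)) (Fin (K + 1)) ℝ) (l : Fin (K + 1))
    (t : Fin K) : ℝ :=
  V l t.succ / V l 0

/-- The k-means objective with centers `θ`. -/
def kmeansObj {p K L : ℕ} (r : Fin p → Fin K → ℝ) (θ : Fin L → Fin K → ℝ) : ℝ :=
  ∑ j, ⨅ l : Fin L, ∑ t, (r j t - θ l t) ^ 2

/-- Euclidean distance from `b` to the simplex with vertices `vs 0, …, vs K`. -/
def simplexDist {K : ℕ} (b : Fin K → ℝ) (vs : Fin (K + 1) → Fin K → ℝ) : ℝ :=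
  ⨅ w : {w : Fin (K + 1) → ℝ // IsProbVec w},
    enorm (fun t => b t - ∑ k, w.1 k * vs k t)

/-- The max distance of a center to the simplex spanned by the selected centers. -/
def maxSimplexDist {K L : ℕ} (θ : Fin L → Fin K → ℝ) (s : Fin (K + 1) → Fin L) : ℝ :=
  ⨆ l, simplexDist (θ l) fun k => θ (s k)

/-- Specification of the two-stage Vertices Hunting algorithm: `θ` is a global optimum
of the k-means objective with `L` clusters, and `s` selects `K+1` affinely independent
cluster centers minimizing the maximal distance of a center to their simplex. -/
def VHSpec {p K L : ℕ} (r : Fin p → Fin K → ℝ) (θ : Fin L → Fin K → ℝ)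
    (s : Fin (K + 1) → Fin L) : Prop :=
  (∀ θ' : Fin L → Fin K → ℝ, kmeansObj r θ ≤ kmeansObj r θ') ∧
  Function.Injective s ∧ AffineIndependent ℝ (fun k => θ (s k)) ∧
  ∀ s' : Fin (K + 1) → Fin L, Function.Injective s' →
    AffineIndependent ℝ (fun k => θ (s' k)) →
      maxSimplexDist θ s ≤ maxSimplexDist θ s'

/-- The barycentric-coordinates step: `π*_j` solves the linear system given by the
estimated vertices. -/
def BarySpec {p K : ℕ} (r : Fin p → Fin K → ℝ) (v : Fin (K + 1) → Fin K → ℝ)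
    (pistar : Fin p → Fin (K + 1) → ℝ) : Prop :=
  ∀ j, (∑ k, pistar j k = 1) ∧ ∀ t, ∑ k, pistar j k * v k t = r j t

/-- Truncate negative entries to zero and renormalize to unit sum. -/
def truncNorm {K : ℕ} (x : Fin K → ℝ) : Fin K → ℝ :=
  fun k => max (x k) 0 / ∑ l, max (x l) 0

/-- The final Topic-SCORE output `Â`: form `Â* = M^{1/2} diag(ξ̂₁) Π̂` and normalize each
column to unit ℓ¹-norm. -/
def AhatOf {p K : ℕ} (Ddiag : Fin p → ℝ) (xihat : Fin (K + 1) → Fin p → ℝ)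
    (pihat : Fin p → Fin (K + 1) → ℝ) : Matrix (Fin p) (Fin (K + 1)) ℝ :=
  Matrix.of fun j k =>
    (Real.sqrt (Ddiag j) * xihat 0 j * pihat j k) /
      ∑ j', |Real.sqrt (Ddiag j') * xihat 0 j' * pihat j' k|

/-- Full specification of the Topic-SCORE estimator (with `t = ∞`) applied to data `D`. -/
def TopicScoreSpec {p n K L : ℕ} (hKp : K + 1 ≤ p) (D : Matrix (Fin p) (Fin n) ℝ)
    (xihat : Fin (K + 1) → Fin p → ℝ) (θ : Fin L → Fin K → ℝ) (s : Fin (K + 1) → Fin L)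
    (pistar : Fin p → Fin (K + 1) → ℝ) (Ahat : Matrix (Fin p) (Fin (K + 1)) ℝ) : Prop :=
  LeadingLeftSingVecs hKp (nrm D (diagAvg D)) xihat ∧
  VHSpec (ratioR xihat) θ s ∧
  BarySpec (ratioR xihat) (fun k => θ (s k)) pistar ∧
  Ahat = AhatOf (diagAvg D) xihat fun j => truncNorm (pistar j)

/-- The ℓ¹ estimation loss `L(Â, A)`, minimized over permutations of the topics. -/
def TVLoss {p K : ℕ} (Ahat A : Matrix (Fin p) (Fin K) ℝ) : ℝ :=
  ⨅ κ : Equiv.Perm (Fin K), ∑ k, ∑ j, |Ahat j (κ k) - A j k|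

section AuxBern


lemma exp_le_quad {x : ℝ} (hx : |x| ≤ 1) : Real.exp x ≤ 1 + x + x ^ 2 := by
  have h := Real.exp_bound hx (n := 2) (by norm_num)
  have h2 : ∑ i ∈ Finset.range 2, x ^ i / (Nat.factorial i : ℝ) = 1 + x := by
    simp [Finset.sum_range_succ, Nat.factorial]
  rw [h2] at h
  have hb : |x| ^ 2 * ((2 + 1 : ℕ) / ((Nat.factorial 2 : ℝ) * 2)) ≤ x ^ 2 := by
    rw [sq_abs]
    have : ((2 + 1 : ℕ) : ℝ) / ((Nat.factorial 2 : ℝ) * 2) = 3 / 4 := by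
      norm_num [Nat.factorial]
    rw [this]
    nlinarith [sq_nonneg x]
  have := abs_le.mp h
  linarith [this.2, hb, (abs_le.mp h).2]

variable {Ω : Type*} [MeasurableSpace Ω] {μ : Measure Ω}

lemma indicator_integrable [IsProbabilityMeasure μ] {Y : Ω → ℝ} (hm : Measurable Y)
    (h01 : ∀ ω, Y ω = 0 ∨ Y ω = 1) : Integrable Y μ := by
  refine (integrable_const (1 : ℝ)).mono' hm.aestronglyMeasurable ?_
  exact Filter.Eventually.of_forall fun ω => by rcases h01 ω with h | h <;> simp [h]

lemma mgf_indicator_le [IsProbabilityMeasure μ] {Y : Ω → ℝ} (hm : Measurable Y)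
    (h01 : ∀ ω, Y ω = 0 ∨ Y ω = 1) {l : ℝ} (hl : |l| ≤ 1) :
    mgf Y μ l ≤ Real.exp ((∫ ω, Y ω ∂μ) * l + (∫ ω, Y ω ∂μ) * l ^ 2) := by
  have hint : Integrable Y μ := indicator_integrable hm h01
  have hpt : (fun ω => Real.exp (l * Y ω)) = fun ω => 1 + (Real.exp l - 1) * Y ω := by
    funext ω; rcases h01 ω with h | h <;> simp [h]
  have hmgf : mgf Y μ l = 1 + (Real.exp l - 1) * ∫ ω, Y ω ∂μ := by
    rw [mgf, hpt, integral_add (integrable_const 1) (hint.const_mul _)]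
    rw [integral_const_mul]
    simp
  have hp0 : 0 ≤ ∫ ω, Y ω ∂μ :=
    integral_nonneg fun ω => by rcases h01 ω with h | h <;> simp [h]
  have hexp : Real.exp l - 1 ≤ l + l ^ 2 := by
    have := exp_le_quad hl; linarith
  calc mgf Y μ l = 1 + (Real.exp l - 1) * ∫ ω, Y ω ∂μ := hmgf
    _ ≤ 1 + ((∫ ω, Y ω ∂μ) * l + (∫ ω, Y ω ∂μ) * l ^ 2) := by nlinarith
    _ ≤ Real.exp ((∫ ω, Y ω ∂μ) * l + (∫ ω, Y ω ∂μ) * l ^ 2) := by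
        have := Real.add_one_le_exp ((∫ ω, Y ω ∂μ) * l + (∫ ω, Y ω ∂μ) * l ^ 2)
        linarith

lemma bernstein_tail {ι : Type*} [Fintype ι] [IsProbabilityMeasure μ]
    (Y : ι → Ω → ℝ) (hm : ∀ i, Measurable (Y i)) (h01 : ∀ i ω, Y i ω = 0 ∨ Y i ω = 1)
    (hind : iIndepFun Y μ)
    (c : ℝ) (hc : c = 1 ∨ c = -1) {l t : ℝ} (hl0 : 0 ≤ l) (hl1 : l ≤ 1) :
    (μ {ω | c * (∑ i, ∫ ω, Y i ω ∂μ) + t ≤ ∑ i, c * Y i ω}).toReal ≤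
      Real.exp (l ^ 2 * (∑ i, ∫ ω, Y i ω ∂μ) - l * t) := by
  classical
  set Z : ι → Ω → ℝ := fun i ω => c * Y i ω with hZ
  have hZm : ∀ i, Measurable (Z i) := fun i => (hm i).const_mul c
  have hindZ : iIndepFun Z μ :=
    hind.comp (fun _ x => c * x) (fun _ => measurable_const_mul c)
  have hc2 : c ^ 2 = 1 := by rcases hc with h | h <;> simp [h]
  have hlc : |l * c| ≤ 1 := by
    rcases hc with h | h <;> simp [h, abs_of_nonneg hl0, hl1]
  -- integrability of exp (l * Z i)
  have hintY : ∀ i, Integrable (Y i) μ := fun i => indicator_integrable (hm i) (h01 i)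
  have hintexp : ∀ i, Integrable (fun ω => Real.exp (l * Z i ω)) μ := by
    intro i
    have hpt : (fun ω => Real.exp (l * Z i ω)) =
        fun ω => 1 + (Real.exp (l * c) - 1) * Y i ω := by
      funext ω; rcases h01 i ω with h | h <;> simp [hZ, h, mul_assoc]
    rw [hpt]
    exact (integrable_const 1).add ((hintY i).const_mul _)
  have hintsum : Integrable (fun ω => Real.exp (l * (∑ i, Z i) ω)) μ :=
    hindZ.integrable_exp_mul_sum hZm fun i _ => hintexp i
  have hch := measure_ge_le_exp_mul_mgf (μ := μ) (X := ∑ i, Z i)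
    (c * (∑ i, ∫ ω, Y i ω ∂μ) + t) hl0 hintsum
  have hev : {ω | c * (∑ i, ∫ ω, Y i ω ∂μ) + t ≤ ∑ i, c * Y i ω} =
      {ω | c * (∑ i, ∫ ω, Y i ω ∂μ) + t ≤ (∑ i, Z i) ω} := by
    ext ω; simp [hZ, Finset.sum_apply]
  rw [hev]
  refine hch.trans ?_
  -- bound the mgf of the sum
  have hmgfsum : mgf (∑ i, Z i) μ l = ∏ i, mgf (Z i) μ l :=
    hindZ.mgf_sum hZm Finset.univ
  have hZmgf : ∀ i, mgf (Z i) μ l ≤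
      Real.exp ((∫ ω, Y i ω ∂μ) * (l * c) + (∫ ω, Y i ω ∂μ) * (l * c) ^ 2) := by
    intro i
    have : mgf (Z i) μ l = mgf (Y i) μ (l * c) := by
      simp only [mgf, hZ]
      congr 1; funext ω; ring_nf
    rw [this]
    exact mgf_indicator_le (hm i) (h01 i) hlc
  have hprod : ∏ i, mgf (Z i) μ l ≤
      ∏ i, Real.exp ((∫ ω, Y i ω ∂μ) * (l * c) + (∫ ω, Y i ω ∂μ) * (l * c) ^ 2) :=
    Finset.prod_le_prod (fun i _ => mgf_nonneg) (fun i _ => hZmgf i)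
  rw [hmgfsum]
  calc Real.exp (-l * (c * (∑ i, ∫ ω, Y i ω ∂μ) + t)) * ∏ i, mgf (Z i) μ l
      ≤ Real.exp (-l * (c * (∑ i, ∫ ω, Y i ω ∂μ) + t)) *
        ∏ i, Real.exp ((∫ ω, Y i ω ∂μ) * (l * c) + (∫ ω, Y i ω ∂μ) * (l * c) ^ 2) := by
        exact mul_le_mul_of_nonneg_left hprod (Real.exp_nonneg _)
    _ = Real.exp (l ^ 2 * (∑ i, ∫ ω, Y i ω ∂μ) - l * t) := by
        rw [← Real.exp_sum, ← Real.exp_add]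
        congr 1
        simp only [mul_pow, hc2, mul_one]
        rw [Finset.sum_add_distrib, ← Finset.sum_mul, ← Finset.sum_mul]
        ring


end AuxBern

/-- Lemma: concentration of the diagonal normalization matrix `M`. -/
theorem statement_16 (K : ℕ) (hK : 1 ≤ K) :
    ∃ C : ℝ, 0 < C ∧
      ∀ (N p : ℕ → ℕ)
        (A : ∀ n : ℕ, Matrix (Fin (p n)) (Fin (K + 1)) ℝ)
        (W : ∀ n : ℕ, Matrix (Fin (K + 1)) (Fin n) ℝ)
        (Ω : ℕ → Type) (mΩ : ∀ n, MeasurableSpace (Ω n)) (μ : ∀ n, Measure (Ω n))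
        (X : ∀ n : ℕ, Ω n → Fin n → Fin (N n) → Fin (p n)),
        (∀ n, K + 1 ≤ p n) → (∀ n, 0 < N n) →
        (∀ n, N n ≤ n ∧ p n ≤ n) →
        (∀ n, ColsProb (A n)) → (∀ n, ColsProb (W n)) →
        (∀ n, ∀ j, 0 < rowL1 (A n) j) →
        (∀ n, IsPLSIWords (μ n) (A n * W n) (X n)) →
        -- N n h_min / log n → ∞
        Tendsto (fun n : ℕ =>
          (N n : ℝ) * n * (⨅ j, rowL1 (A n) j) / Real.log n) atTop atTop →
        Tendsto (fun n : ℕ => (n : ℝ) ^ 3 *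
          (1 - (μ n {ω | ∀ j,
            |diagAvg (empD (X n ω)) j - diagAvg (A n * W n) j| ≤
              C * (Real.sqrt ((N n : ℝ) * n))⁻¹ *
                Real.sqrt (rowL1 (A n) j * Real.log n)}).toReal))
          atTop (nhds 0) := by
  refine ⟨6, by norm_num, ?_⟩
  intro N p A W Ω mΩ μ X hKp hN hnp hA hW hA3 hPLSI hT
  have h5 : Tendsto (fun n : ℕ => 2 / (n : ℝ) ^ 5) atTop (nhds 0) :=
    Tendsto.div_atTop tendsto_const_nhds
      ((tendsto_pow_atTop (by norm_num : (5:ℕ) ≠ 0)).comp tendsto_natCast_atTop_atTop)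
  refine tendsto_of_tendsto_of_tendsto_of_le_of_le' tendsto_const_nhds h5 ?_ ?_
  · -- nonnegativity
    filter_upwards [] with n
    haveI : IsProbabilityMeasure (μ n) := (hPLSI n).1
    have h1 : ((μ n) {ω | ∀ j,
        |diagAvg (empD (X n ω)) j - diagAvg (A n * W n) j| ≤
          6 * (Real.sqrt ((N n : ℝ) * n))⁻¹ *
            Real.sqrt (rowL1 (A n) j * Real.log n)}).toReal ≤ 1 := by
      simpa using ENNReal.toReal_mono ENNReal.one_ne_top prob_le_one
    have h2 : (0:ℝ) ≤ (n:ℝ) ^ 3 := by positivity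
    nlinarith
  · filter_upwards [hT.eventually_ge_atTop 36, eventually_ge_atTop 2] with n h36 hn2
    haveI : IsProbabilityMeasure (μ n) := (hPLSI n).1
    have hn0 : 0 < n := by omega
    have hnR : (0:ℝ) < n := by exact_mod_cast hn0
    have hNR : (0:ℝ) < (N n : ℝ) := by exact_mod_cast hN n
    have hlog : 0 < Real.log n := Real.log_pos (by exact_mod_cast hn2)
    obtain ⟨hprob, hXm, hXind, hXlaw⟩ := hPLSI n
    haveI : Nonempty (Fin (p n)) :=
      ⟨⟨0, lt_of_lt_of_le (by omega) (hKp n)⟩⟩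
    -- h_min ≤ h_j and the key lower bound on N n h_j
    have h36' : ∀ j, 36 * Real.log n ≤ (N n : ℝ) * n * rowL1 (A n) j := by
      intro j
      have hbdd : BddBelow (Set.range fun j => rowL1 (A n) j) := by
        refine ⟨0, ?_⟩
        rintro x ⟨j', rfl⟩
        exact (hA3 n j').le
      have hmin : (⨅ j', rowL1 (A n) j') ≤ rowL1 (A n) j := ciInf_le hbdd j
      have h1 : 36 * Real.log n ≤ (N n : ℝ) * n * (⨅ j', rowL1 (A n) j') := by
        have := (le_div_iff₀ hlog).mp h36
        linarith
      have h2 : (N n : ℝ) * n * (⨅ j', rowL1 (A n) j') ≤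
          (N n : ℝ) * n * rowL1 (A n) j :=
        mul_le_mul_of_nonneg_left hmin (by positivity)
      linarith
    -- the per-word tail bound
    set Bad : Fin (p n) → Set (Ω n) := fun j =>
      {ω | ¬ |diagAvg (empD (X n ω)) j - diagAvg (A n * W n) j| ≤
        6 * (Real.sqrt ((N n : ℝ) * n))⁻¹ * Real.sqrt (rowL1 (A n) j * Real.log n)}
      with hBad
    have tail : ∀ j, ((μ n) (Bad j)).toReal ≤ 2 * ((n:ℝ) ^ 9)⁻¹ := by
      intro j
      set Y : Fin n × Fin (N n) → Ω n → ℝ :=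
        fun im ω => if X n ω im.1 im.2 = j then 1 else 0 with hY
      have hYm : ∀ im, Measurable (Y im) := fun im =>
        (measurable_of_countable (fun x : Fin (p n) => if x = j then (1:ℝ) else 0)).comp
          (hXm im.1 im.2)
      have hY01 : ∀ im ω, Y im ω = 0 ∨ Y im ω = 1 := by
        intro im ω
        by_cases h : X n ω im.1 im.2 = j <;> simp [hY, h]
      have hYind : iIndepFun Y (μ n) :=
        hXind.comp (fun _ x => if x = j then (1:ℝ) else 0)
          (fun _ => measurable_of_countable _)
      -- the mean of each indicator
      have hYint : ∀ im, (∫ ω, Y im ω ∂(μ n)) = (A n * W n) j im.1 := by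
        intro im
        have hS : MeasurableSet {ω | X n ω im.1 im.2 = j} :=
          (hXm im.1 im.2) (measurableSet_singleton j)
        have : (fun ω => Y im ω) =
            Set.indicator {ω | X n ω im.1 im.2 = j} (fun _ => (1:ℝ)) := by
          funext ω
          by_cases h : X n ω im.1 im.2 = j <;>
            simp [hY, h, Set.indicator_apply, Set.mem_setOf_eq]
        rw [this, integral_indicator_const (1:ℝ) hS, smul_eq_mul, mul_one]
        exact hXlaw im.1 im.2 j
      obtain ⟨P, hPdef⟩ : ∃ P : ℝ, P = ∑ im : Fin n × Fin (N n), ∫ ω, Y im ω ∂(μ n) :=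
        ⟨_, rfl⟩
      obtain ⟨V, hVdef⟩ : ∃ V : ℝ, V = (N n : ℝ) * n * rowL1 (A n) j := ⟨_, rfl⟩
      have hV : 0 < V := by
        have := hA3 n j
        rw [hVdef]; positivity
      -- P ≤ V
      have hD0le : ∀ i, (A n * W n) j i ≤ rowL1 (A n) j := by
        intro i
        rw [Matrix.mul_apply, rowL1]
        refine Finset.sum_le_sum fun k _ => ?_
        have hAk : 0 ≤ A n j k := (hA n k).1 j
        have hWk : W n k i ≤ 1 := by
          have h1 : W n k i ≤ ∑ k', W n k' i :=
            Finset.single_le_sum (fun k' _ => (hW n i).1 k') (Finset.mem_univ k)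
          rw [(hW n i).2] at h1
          exact h1
        calc A n j k * W n k i ≤ A n j k * 1 :=
              mul_le_mul_of_nonneg_left hWk hAk
          _ = A n j k := by ring
          _ ≤ |A n j k| := le_abs_self _
      have hPV : P ≤ V := by
        have h1 : P ≤ ∑ _im : Fin n × Fin (N n), rowL1 (A n) j := by
          rw [hPdef]
          exact Finset.sum_le_sum fun im _ => by rw [hYint im]; exact hD0le im.1
        have h2 : ∑ _im : Fin n × Fin (N n), rowL1 (A n) j = V := by
          rw [Finset.sum_const, Finset.card_univ, Fintype.card_prod, Fintype.card_fin,
            Fintype.card_fin, nsmul_eq_mul, hVdef]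
          push_cast
          ring
        linarith
      have hP0 : 0 ≤ P := by
        rw [hPdef]
        refine Finset.sum_nonneg fun im _ => ?_
        exact integral_nonneg fun ω => by rcases hY01 im ω with h | h <;> simp [h]
      obtain ⟨t, htdef⟩ : ∃ t : ℝ, t = 6 * Real.sqrt (V * Real.log n) := ⟨_, rfl⟩
      have ht0 : 0 ≤ t := by rw [htdef]; positivity
      obtain ⟨l, hldef⟩ : ∃ l : ℝ, l = t / (2 * V) := ⟨_, rfl⟩
      have hl0 : 0 ≤ l := by rw [hldef]; exact div_nonneg ht0 (by positivity)
      have htV : t ≤ V := by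
        have hlogV : Real.log n ≤ V / 36 := by
          have := h36' j; rw [← hVdef] at this; linarith
        have h1 : Real.sqrt (V * Real.log n) ≤ Real.sqrt ((V / 6) ^ 2) := by
          apply Real.sqrt_le_sqrt
          nlinarith
        have h2 : Real.sqrt ((V / 6) ^ 2) = V / 6 := Real.sqrt_sq (by positivity)
        rw [htdef]
        rw [h2] at h1
        linarith
      have hl1 : l ≤ 1 := by
        rw [hldef, div_le_one (by positivity)]
        linarith
      -- exponent bound
      have ht2 : t ^ 2 = 36 * (V * Real.log n) := by
        rw [htdef, mul_pow, Real.sq_sqrt (by positivity)]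
        norm_num
      have hexp : l ^ 2 * P - l * t ≤ -(9 * Real.log n) := by
        have h1 : l ^ 2 * P ≤ l ^ 2 * V :=
          mul_le_mul_of_nonneg_left hPV (sq_nonneg l)
        have h2 : l ^ 2 * V - l * t = -(t ^ 2 / (4 * V)) := by
          rw [hldef]
          field_simp
          ring
        have h3 : t ^ 2 / (4 * V) = 9 * Real.log n := by
          rw [ht2]
          field_simp
          ring
        rw [h3] at h2
        linarith
      have hexpn : Real.exp (-(9 * Real.log n)) = ((n:ℝ) ^ 9)⁻¹ := by
        rw [Real.exp_neg]
        congr 1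
        rw [show (9:ℝ) * Real.log n = Real.log ((n:ℝ) ^ 9) by
          rw [Real.log_pow]; push_cast; ring]
        exact Real.exp_log (by positivity)
      -- the two tails via Bernstein
      have hBp := bernstein_tail (μ := μ n) Y hYm hY01 hYind 1 (Or.inl rfl) hl0 hl1
        (t := t)
      have hBm := bernstein_tail (μ := μ n) Y hYm hY01 hYind (-1) (Or.inr rfl) hl0 hl1
        (t := t)
      rw [← hPdef] at hBp hBm
      have hBp' : ((μ n) {ω | 1 * P + t ≤ ∑ im : Fin n × Fin (N n), 1 * Y im ω}).toReal
          ≤ ((n:ℝ) ^ 9)⁻¹ := by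
        refine hBp.trans ?_
        rw [← hexpn]
        exact Real.exp_le_exp.mpr (by linarith [hexp])
      have hBm' : ((μ n) {ω | (-1) * P + t ≤ ∑ im : Fin n × Fin (N n), (-1) * Y im ω}).toReal
          ≤ ((n:ℝ) ^ 9)⁻¹ := by
        refine hBm.trans ?_
        rw [← hexpn]
        exact Real.exp_le_exp.mpr (by linarith [hexp])
      -- Bad j is contained in the union of the two tail events
      have hdev : ∀ ω, diagAvg (empD (X n ω)) j - diagAvg (A n * W n) j =
          ((n:ℝ) * N n)⁻¹ * ((∑ im : Fin n × Fin (N n), Y im ω) - P) := by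
        intro ω
        have hS : (∑ im : Fin n × Fin (N n), Y im ω) =
            ∑ i, ∑ m, Y (i, m) ω := Fintype.sum_prod_type _
        have hPP : P = ∑ i, (N n : ℝ) * (A n * W n) j i := by
          rw [hPdef, Fintype.sum_prod_type]
          simp only [hYint]
          simp [Finset.sum_const, Finset.card_univ, Fintype.card_fin, nsmul_eq_mul]
        have lhs1 : diagAvg (empD (X n ω)) j =
            ((n:ℝ) * N n)⁻¹ * ∑ i, ∑ m, Y (i, m) ω := by
          unfold diagAvg empD
          simp only [Matrix.of_apply]
          rw [Finset.mul_sum, Finset.mul_sum]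
          refine Finset.sum_congr rfl fun i _ => ?_
          simp only [hY]
          rw [mul_inv]
          ring
        have lhs2 : diagAvg (A n * W n) j = ((n:ℝ) * N n)⁻¹ * P := by
          rw [hPP]
          unfold diagAvg
          rw [Finset.mul_sum, Finset.mul_sum]
          refine Finset.sum_congr rfl fun i _ => ?_
          rw [mul_inv]
          field_simp
        rw [lhs1, lhs2, hS]
        ring
      have hbt : 6 * (Real.sqrt ((N n : ℝ) * n))⁻¹ * Real.sqrt (rowL1 (A n) j * Real.log n)
          = ((n:ℝ) * N n)⁻¹ * t := by
        have hs : Real.sqrt ((N n : ℝ) * n) * Real.sqrt ((N n : ℝ) * n) = (N n : ℝ) * n :=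
          Real.mul_self_sqrt (by positivity)
        have hsplit : Real.sqrt (V * Real.log n) =
            Real.sqrt ((N n : ℝ) * n) * Real.sqrt (rowL1 (A n) j * Real.log n) := by
          rw [show V * Real.log n = ((N n : ℝ) * n) * (rowL1 (A n) j * Real.log n) by
            rw [hVdef]; ring]
          exact Real.sqrt_mul (by positivity) _
        have hspos : 0 < Real.sqrt ((N n : ℝ) * n) := Real.sqrt_pos.2 (by positivity)
        have hnN : ((n:ℝ) * N n) = Real.sqrt ((N n : ℝ) * n) * Real.sqrt ((N n : ℝ) * n) := by
          rw [hs]; ring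
        rw [htdef, hsplit, hnN, mul_inv]
        rw [show (Real.sqrt ((N n : ℝ) * n))⁻¹ * (Real.sqrt ((N n : ℝ) * n))⁻¹ *
            (6 * (Real.sqrt ((N n : ℝ) * n) * Real.sqrt (rowL1 (A n) j * Real.log n)))
            = 6 * (((Real.sqrt ((N n : ℝ) * n))⁻¹ * Real.sqrt ((N n : ℝ) * n)) *
              ((Real.sqrt ((N n : ℝ) * n))⁻¹ * Real.sqrt (rowL1 (A n) j * Real.log n))) by
          ring, inv_mul_cancel₀ hspos.ne']
        ring
      have hsub : Bad j ⊆
          {ω | 1 * P + t ≤ ∑ im : Fin n × Fin (N n), 1 * Y im ω} ∪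
          {ω | (-1) * P + t ≤ ∑ im : Fin n × Fin (N n), (-1) * Y im ω} := by
        intro ω hω
        rw [hBad] at hω
        have hlt := not_le.mp hω
        rw [hdev ω, hbt, abs_mul, abs_of_pos (by positivity :
          (0:ℝ) < ((n:ℝ) * N n)⁻¹)] at hlt
        have htS : t < |(∑ im : Fin n × Fin (N n), Y im ω) - P| :=
          lt_of_mul_lt_mul_left hlt (by positivity)
        rcases le_or_gt ((∑ im : Fin n × Fin (N n), Y im ω) - P) 0 with hc | hc
        · right
          have : t ≤ P - (∑ im : Fin n × Fin (N n), Y im ω) := by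
            rw [abs_of_nonpos hc] at htS
            linarith
          simp only [Set.mem_setOf_eq, neg_one_mul, Finset.sum_neg_distrib]
          linarith
        · left
          have : t ≤ (∑ im : Fin n × Fin (N n), Y im ω) - P := by
            rw [abs_of_pos hc] at htS
            linarith
          simp only [Set.mem_setOf_eq, one_mul]
          linarith
      calc ((μ n) (Bad j)).toReal
          ≤ (((μ n) {ω | 1 * P + t ≤ ∑ im : Fin n × Fin (N n), 1 * Y im ω}) +
             ((μ n) {ω | (-1) * P + t ≤ ∑ im : Fin n × Fin (N n), (-1) * Y im ω})).toReal := by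
            apply ENNReal.toReal_mono
            · exact ENNReal.add_ne_top.mpr ⟨measure_ne_top _ _, measure_ne_top _ _⟩
            · exact (measure_mono hsub).trans (measure_union_le _ _)
        _ = ((μ n) {ω | 1 * P + t ≤ ∑ im : Fin n × Fin (N n), 1 * Y im ω}).toReal +
            ((μ n) {ω | (-1) * P + t ≤ ∑ im : Fin n × Fin (N n), (-1) * Y im ω}).toReal :=
            ENNReal.toReal_add (measure_ne_top _ _) (measure_ne_top _ _)
        _ ≤ ((n:ℝ) ^ 9)⁻¹ + ((n:ℝ) ^ 9)⁻¹ := add_le_add hBp' hBm'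
        _ = 2 * ((n:ℝ) ^ 9)⁻¹ := by ring
    -- assemble: union bound over j
    have hcompl : 1 - ((μ n) {ω | ∀ j,
        |diagAvg (empD (X n ω)) j - diagAvg (A n * W n) j| ≤
          6 * (Real.sqrt ((N n : ℝ) * n))⁻¹ *
            Real.sqrt (rowL1 (A n) j * Real.log n)}).toReal ≤
        ∑ j, ((μ n) (Bad j)).toReal := by
      set E := {ω | ∀ j,
        |diagAvg (empD (X n ω)) j - diagAvg (A n * W n) j| ≤
          6 * (Real.sqrt ((N n : ℝ) * n))⁻¹ *
            Real.sqrt (rowL1 (A n) j * Real.log n)} with hEdef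
      have hsubc : Eᶜ ⊆ ⋃ j, Bad j := by
        intro ω hω
        rw [hEdef] at hω
        simp only [Set.mem_compl_iff, Set.mem_setOf_eq, not_forall] at hω
        obtain ⟨j, hj⟩ := hω
        exact Set.mem_iUnion.mpr ⟨j, hj⟩
      have h1 : (1 : ENNReal) ≤ (μ n) E + (μ n) Eᶜ := by
        rw [← measure_univ (μ := μ n), ← Set.union_compl_self E]
        exact measure_union_le _ _
      have h2 : (μ n) Eᶜ ≤ ∑ j, (μ n) (Bad j) := by
        refine (measure_mono hsubc).trans ?_
        exact measure_iUnion_fintype_le _ _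
      have hSne : (∑ j, (μ n) (Bad j)) ≠ ⊤ :=
        (ENNReal.sum_lt_top.mpr fun j _ => measure_lt_top _ _).ne
      have h3 : ((μ n) Eᶜ).toReal ≤ ∑ j, ((μ n) (Bad j)).toReal := by
        have := ENNReal.toReal_mono hSne h2
        rwa [ENNReal.toReal_sum (fun j _ => measure_ne_top _ _)] at this
      have h4 : (1:ℝ) ≤ ((μ n) E).toReal + ((μ n) Eᶜ).toReal := by
        have := ENNReal.toReal_mono
          (ENNReal.add_ne_top.mpr ⟨measure_ne_top _ _, measure_ne_top _ _⟩) h1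
        rwa [ENNReal.toReal_add (measure_ne_top _ _) (measure_ne_top _ _),
          ENNReal.toReal_one] at this
      linarith
    have hsum : ∑ j, ((μ n) (Bad j)).toReal ≤ (n:ℝ) * (2 * ((n:ℝ) ^ 9)⁻¹) := by
      calc ∑ j, ((μ n) (Bad j)).toReal ≤ ∑ _j : Fin (p n), 2 * ((n:ℝ) ^ 9)⁻¹ :=
            Finset.sum_le_sum fun j _ => tail j
        _ = (p n : ℝ) * (2 * ((n:ℝ) ^ 9)⁻¹) := by
            rw [Finset.sum_const, Finset.card_univ, Fintype.card_fin, nsmul_eq_mul]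
        _ ≤ (n:ℝ) * (2 * ((n:ℝ) ^ 9)⁻¹) := by
            have hpn : (p n : ℝ) ≤ (n : ℝ) := by exact_mod_cast (hnp n).2
            exact mul_le_mul_of_nonneg_right hpn (by positivity)
    have hfinal : 1 - ((μ n) {ω | ∀ j,
        |diagAvg (empD (X n ω)) j - diagAvg (A n * W n) j| ≤
          6 * (Real.sqrt ((N n : ℝ) * n))⁻¹ *
            Real.sqrt (rowL1 (A n) j * Real.log n)}).toReal ≤
        (n:ℝ) * (2 * ((n:ℝ) ^ 9)⁻¹) := hcompl.trans hsum
    have hne : (n:ℝ) ≠ 0 := ne_of_gt hnR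
    calc (n:ℝ) ^ 3 * (1 - ((μ n) {ω | ∀ j,
        |diagAvg (empD (X n ω)) j - diagAvg (A n * W n) j| ≤
          6 * (Real.sqrt ((N n : ℝ) * n))⁻¹ *
            Real.sqrt (rowL1 (A n) j * Real.log n)}).toReal)
        ≤ (n:ℝ) ^ 3 * ((n:ℝ) * (2 * ((n:ℝ) ^ 9)⁻¹)) :=
          mul_le_mul_of_nonneg_left hfinal (by positivity)
      _ = 2 / (n:ℝ) ^ 5 := by
          field_simp


end TopicModel
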